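/- arXiv:1208.6420 — 6 statements merged into one kernel-verified Lean document; each statement's English description precedes it below -/
import Mathlib

section
/- Solvability of the SOF linear equation with bound: let m, n ≥ 1, let B ∈ M_m(ℂ) with ‖B‖ ≤ C′, let A ∈ M_n(ℂ) be invertible with ‖A⁻¹‖ ≤ K/2 for constants C′, K > 0, and let μ ∈ ℂ^{m×n} with ‖μ‖ ≤ γ. If 0 < ε ≤ 1/(K C′), then there exists φ ∈ ℂ^{m×n} satisfying ε B φ + μ − φ A = 0 with ‖φ‖ ≤ K γ; moreover φ is the unique solution in the closed ball of radius Kγ/2 centered at μ A⁻¹. -/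
open scoped Matrix.Norms.L2Operator

/-- **Solvability of the SOF linear equation with bound** (Lemma 5.1).
Matrices carry the operator norms induced by the Euclidean norms.  Let `B ∈ M_m(ℂ)`
with `‖B‖ ≤ C′`, `A ∈ M_n(ℂ)` invertible with `‖A⁻¹‖ ≤ K/2`, and `μ ∈ ℂ^{m×n}` with
`‖μ‖ ≤ γ`.  If `0 < ε ≤ 1/(K C′)` then the equation `ε B φ + μ − φ A = 0` has a
solution `φ` with `‖φ‖ ≤ K γ`, unique in the closed ball of radius `Kγ/2` centered
at `μ A⁻¹`. -/
theorem sof_linear_equation_solvable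
    {m n : ℕ} (hm : 1 ≤ m) (hn : 1 ≤ n)
    (B : Matrix (Fin m) (Fin m) ℂ) (A : Matrix (Fin n) (Fin n) ℂ)
    (μ : Matrix (Fin m) (Fin n) ℂ)
    (C' K γ ε : ℝ) (hC' : 0 < C') (hK : 0 < K)
    (hB : ‖B‖ ≤ C') (hAunit : IsUnit A) (hAinv : ‖A⁻¹‖ ≤ K / 2)
    (hμ : ‖μ‖ ≤ γ) (hε0 : 0 < ε) (hε : ε ≤ 1 / (K * C')) :
    ∃ φ : Matrix (Fin m) (Fin n) ℂ,
      ε • (B * φ) + μ - φ * A = 0 ∧ ‖φ‖ ≤ K * γ ∧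
      φ ∈ Metric.closedBall (μ * A⁻¹) (K * γ / 2) ∧
      ∀ φ' : Matrix (Fin m) (Fin n) ℂ,
        ε • (B * φ') + μ - φ' * A = 0 →
        φ' ∈ Metric.closedBall (μ * A⁻¹) (K * γ / 2) → φ' = φ := by
  classical
  -- basic facts
  have hγ0 : 0 ≤ γ := le_trans (norm_nonneg μ) hμ
  have hAinv0 : 0 ≤ ‖A⁻¹‖ := norm_nonneg _
  have hdet : IsUnit A.det := (Matrix.isUnit_iff_isUnit_det A).mp hAunit
  have hAAinv : A * A⁻¹ = 1 := Matrix.mul_nonsing_inv A hdet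
  have hAinvA : A⁻¹ * A = 1 := Matrix.nonsing_inv_mul A hdet
  -- the contraction map
  set T : Matrix (Fin m) (Fin n) ℂ → Matrix (Fin m) (Fin n) ℂ :=
    fun φ => (ε • (B * φ) + μ) * A⁻¹ with hT
  -- the key contraction estimate
  have hq : ε * (C' * (K / 2)) ≤ 1 / 2 := by
    have h1 : ε * (K * C') ≤ 1 := by
      rw [le_div_iff₀ (by positivity)] at hε; linarith
    have : ε * (C' * (K / 2)) = (ε * (K * C')) / 2 := by ring
    rw [this]; linarith
  have key : ∀ x y : Matrix (Fin m) (Fin n) ℂ,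
      ‖T x - T y‖ ≤ (1 / 2) * ‖x - y‖ := by
    intro x y
    have h1 : T x - T y = (ε • (B * (x - y))) * A⁻¹ := by
      simp only [hT]
      rw [← Matrix.sub_mul, Matrix.mul_sub, smul_sub]
      congr 1
      abel
    rw [h1]
    calc ‖(ε • (B * (x - y))) * A⁻¹‖
        ≤ ‖ε • (B * (x - y))‖ * ‖A⁻¹‖ := Matrix.l2_opNorm_mul _ _
      _ = ε * ‖B * (x - y)‖ * ‖A⁻¹‖ := by
          rw [norm_smul, Real.norm_eq_abs, abs_of_pos hε0]
      _ ≤ ε * (‖B‖ * ‖x - y‖) * ‖A⁻¹‖ := by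
          have := Matrix.l2_opNorm_mul B (x - y)
          gcongr
      _ ≤ ε * (C' * ‖x - y‖) * (K / 2) := by
          gcongr
      _ = (ε * (C' * (K / 2))) * ‖x - y‖ := by ring
      _ ≤ (1 / 2) * ‖x - y‖ := by
          have := norm_nonneg (x - y); nlinarith
  -- T is a contraction
  have hlip : LipschitzWith (1 / 2) T := by
    apply LipschitzWith.of_dist_le_mul
    intro x y
    rw [dist_eq_norm, dist_eq_norm]
    simpa using key x y
  have hcontr : ContractingWith (1 / 2) T := ⟨one_half_lt_one, hlip⟩
  -- fixed point
  set φ := hcontr.fixedPoint T with hφdef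
  have hfix : T φ = φ := hcontr.fixedPoint_isFixedPt
  clear_value φ
  -- fixed point iff equation
  have equiv_eq : ∀ ψ : Matrix (Fin m) (Fin n) ℂ,
      ε • (B * ψ) + μ - ψ * A = 0 ↔ T ψ = ψ := by
    intro ψ
    constructor
    · intro h
      have h' : ε • (B * ψ) + μ = ψ * A := by
        have := sub_eq_zero.mp h; linear_combination (norm := noncomm_ring) this
      simp only [hT, h', Matrix.mul_assoc, hAAinv, Matrix.mul_one]
    · intro h
      have h2 : (ε • (B * ψ) + μ) * A⁻¹ = ψ := h
      have h' : ψ * A = ε • (B * ψ) + μ := by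
        conv_lhs => rw [← h2]
        rw [Matrix.mul_assoc, hAinvA, Matrix.mul_one]
      rw [h', sub_self]
  have heq : ε • (B * φ) + μ - φ * A = 0 := (equiv_eq φ).mpr hfix
  -- norm bounds
  have hμAinv : ‖μ * A⁻¹‖ ≤ γ * (K / 2) := by
    calc ‖μ * A⁻¹‖ ≤ ‖μ‖ * ‖A⁻¹‖ := Matrix.l2_opNorm_mul _ _
      _ ≤ γ * (K / 2) := by gcongr
  have hdiff : ‖φ - μ * A⁻¹‖ ≤ (1 / 2) * ‖φ‖ := by
    have h1 : φ - μ * A⁻¹ = (ε • (B * φ)) * A⁻¹ := by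
      conv_lhs => rw [← hfix]
      simp only [hT]
      rw [Matrix.add_mul]
      abel
    rw [h1]
    calc ‖(ε • (B * φ)) * A⁻¹‖ ≤ ‖ε • (B * φ)‖ * ‖A⁻¹‖ := Matrix.l2_opNorm_mul _ _
      _ = ε * ‖B * φ‖ * ‖A⁻¹‖ := by
          rw [norm_smul, Real.norm_eq_abs, abs_of_pos hε0]
      _ ≤ ε * (‖B‖ * ‖φ‖) * ‖A⁻¹‖ := by
          have := Matrix.l2_opNorm_mul B φ; gcongr
      _ ≤ ε * (C' * ‖φ‖) * (K / 2) := by gcongr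
      _ = (ε * (C' * (K / 2))) * ‖φ‖ := by ring
      _ ≤ (1 / 2) * ‖φ‖ := by have := norm_nonneg φ; nlinarith
  have hφnorm : ‖φ‖ ≤ K * γ := by
    have h1 : ‖φ‖ ≤ ‖φ - μ * A⁻¹‖ + ‖μ * A⁻¹‖ := by
      simpa using norm_add_le (φ - μ * A⁻¹) (μ * A⁻¹)
    linarith
  have hball : φ ∈ Metric.closedBall (μ * A⁻¹) (K * γ / 2) := by
    rw [Metric.mem_closedBall, dist_eq_norm]
    linarith
  refine ⟨φ, heq, hφnorm, hball, ?_⟩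
  intro φ' heq' _
  have hfix' : T φ' = φ' := (equiv_eq φ').mp heq'
  have h2 : ‖φ' - φ‖ ≤ (1 / 2) * ‖φ' - φ‖ := by
    have := key φ' φ
    rwa [hfix', hfix] at this
  have h3 : ‖φ' - φ‖ = 0 := by linarith [norm_nonneg (φ' - φ)]
  exact sub_eq_zero.mp (norm_eq_zero.mp h3)
end

section
/- Perturbed Sylvester system: let A ∈ M_n(ℂ) be such that the Sylvester operator S(X) = AᵀX + XA on M_n(ℂ) is invertible with ‖S⁻¹‖ ≤ K/2 (operator norm with respect to the matrix operator norm), let D ∈ M_m(ℂ) with ‖D‖_∞ ≤ C′ in the sense that Σ_j |D_{ij}| ≤ C′ for each i, and let Q¹,…,Q^m ∈ M_n(ℂ) be symmetric with max_i ‖Qⁱ‖ ≤ q. If 0 < ε ≤ 1/(KC′), then there exists a family (ψ¹,…,ψ^m) of matrices in M_n(ℂ) satisfying ε Σ_{j=1}^m D_{ij} ψ^j + Qⁱ − Aᵀψⁱ − ψⁱA = 0 for every 1 ≤ i ≤ m, with each ψⁱ symmetric and max_i ‖ψⁱ‖ ≤ Kq; this solution is unique among families with max_i ‖ψⁱ‖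 ≤ Kq. -/
open Matrix
open scoped Matrix.Norms.L2Operator

/-- **Perturbed Sylvester system** (the linear system (5.3)/(6.5)).  Matrices carry
the operator norms induced by the Euclidean norms.  If the Sylvester operator
`S(X) = AᵀX + XA` is invertible with `‖S⁻¹‖ ≤ K/2`, the rows of `D` satisfy
`Σⱼ|D_{ij}| ≤ C′`, each `Qⁱ` is symmetric with `‖Qⁱ‖ ≤ q`, and `0 < ε ≤ 1/(KC′)`,
then the system `ε Σⱼ D_{ij} ψʲ + Qⁱ − Aᵀψⁱ − ψⁱA = 0` has a solution family with
each `ψⁱ` symmetric and `max_i ‖ψⁱ‖ ≤ Kq`, unique among families with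
`max_i ‖ψⁱ‖ ≤ Kq`. -/
theorem perturbed_sylvester_system
    {n m : ℕ} (A : Matrix (Fin n) (Fin n) ℂ)
    (Sinv : Matrix (Fin n) (Fin n) ℂ →L[ℂ] Matrix (Fin n) (Fin n) ℂ)
    (hS : ∀ M : Matrix (Fin n) (Fin n) ℂ,
      Sinv (Aᵀ * M + M * A) = M ∧ Aᵀ * (Sinv M) + (Sinv M) * A = M)
    (K C' q ε : ℝ) (hK : 0 < K) (hC' : 0 < C')
    (hSinv : ‖Sinv‖ ≤ K / 2)
    (D : Matrix (Fin m) (Fin m) ℂ)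
    (hD : ∀ i, ∑ j, ‖D i j‖ ≤ C')
    (Q : Fin m → Matrix (Fin n) (Fin n) ℂ)
    (hQsymm : ∀ i, (Q i)ᵀ = Q i) (hQ : ∀ i, ‖Q i‖ ≤ q)
    (hε0 : 0 < ε) (hε : ε ≤ 1 / (K * C')) :
    ∃ ψ : Fin m → Matrix (Fin n) (Fin n) ℂ,
      (∀ i, ε • (∑ j, D i j • ψ j) + Q i - Aᵀ * ψ i - ψ i * A = 0) ∧
      (∀ i, (ψ i)ᵀ = ψ i) ∧ (∀ i, ‖ψ i‖ ≤ K * q) ∧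
      ∀ ψ' : Fin m → Matrix (Fin n) (Fin n) ℂ,
        (∀ i, ε • (∑ j, D i j • ψ' j) + Q i - Aᵀ * ψ' i - ψ' i * A = 0) →
        (∀ i, ‖ψ' i‖ ≤ K * q) → ψ' = ψ := by
  rcases Nat.eq_zero_or_pos m with hm | hm
  · subst hm
    exact ⟨fun i => 0, fun i => i.elim0, fun i => i.elim0, fun i => i.elim0,
      fun ψ' _ _ => funext fun i => i.elim0⟩
  have hq0 : 0 ≤ q := le_trans (norm_nonneg _) (hQ ⟨0, hm⟩)
  set L0 : (Fin m → Matrix (Fin n) (Fin n) ℂ) →ₗ[ℂ] (Fin m → Matrix (Fin n) (Fin n) ℂ) :=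
    { toFun := fun ψ i => ε • Sinv (∑ j, D i j • ψ j)
      map_add' := by
        intro ψ φ
        funext i
        simp [Pi.add_apply, smul_add, Finset.sum_add_distrib]
      map_smul' := by
        intro c ψ
        funext i
        have hs : (∑ j, D i j • c • ψ j) = c • ∑ j, D i j • ψ j := by
          rw [Finset.smul_sum]
          exact Finset.sum_congr rfl fun j _ => smul_comm _ _ _
        show ε • Sinv (∑ j, D i j • (c • ψ) j)
            = (c • fun i => ε • Sinv (∑ j, D i j • ψ j)) i
        simp only [Pi.smul_apply]
        rw [hs, _root_.map_smul, smul_comm] } with hL0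
  set L : (Fin m → Matrix (Fin n) (Fin n) ℂ) →L[ℂ] (Fin m → Matrix (Fin n) (Fin n) ℂ) :=
    LinearMap.toContinuousLinearMap L0 with hL
  have hLapp : ∀ ψ i, L ψ i = ε • Sinv (∑ j, D i j • ψ j) := fun ψ i => rfl
  have hεKC : ε * (K * C') ≤ 1 := by
    rw [le_div_iff₀ (by positivity)] at hε
    exact hε
  have hLbound : ∀ ψ : Fin m → Matrix (Fin n) (Fin n) ℂ, ‖L ψ‖ ≤ (1/2) * ‖ψ‖ := by
    intro ψ
    refine pi_norm_le_iff_of_nonneg (by positivity) |>.2 fun i => ?_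
    have hsum : ‖∑ j, D i j • ψ j‖ ≤ C' * ‖ψ‖ := by
      calc ‖∑ j, D i j • ψ j‖ ≤ ∑ j, ‖D i j • ψ j‖ := norm_sum_le _ _
      _ = ∑ j, ‖D i j‖ * ‖ψ j‖ := by
          simp [norm_smul]
      _ ≤ ∑ j, ‖D i j‖ * ‖ψ‖ := by
          refine Finset.sum_le_sum fun j _ => ?_
          exact mul_le_mul_of_nonneg_left (norm_le_pi_norm ψ j) (norm_nonneg _)
      _ = (∑ j, ‖D i j‖) * ‖ψ‖ := by rw [Finset.sum_mul]
      _ ≤ C' * ‖ψ‖ := mul_le_mul_of_nonneg_right (hD i) (norm_nonneg _)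
    have h2 : ‖Sinv (∑ j, D i j • ψ j)‖ ≤ (K/2) * (C' * ‖ψ‖) := by
      calc ‖Sinv (∑ j, D i j • ψ j)‖ ≤ ‖Sinv‖ * ‖∑ j, D i j • ψ j‖ := Sinv.le_opNorm _
      _ ≤ (K/2) * (C' * ‖ψ‖) :=
          mul_le_mul hSinv hsum (norm_nonneg _) (by linarith)
    rw [hLapp, norm_smul, Real.norm_eq_abs, abs_of_pos hε0]
    calc ε * ‖Sinv (∑ j, D i j • ψ j)‖ ≤ ε * ((K/2) * (C' * ‖ψ‖)) :=
          mul_le_mul_of_nonneg_left h2 hε0.le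
    _ = (ε * (K * C')) * ‖ψ‖ / 2 := by ring
    _ ≤ 1 * ‖ψ‖ / 2 := by
        have h := norm_nonneg ψ
        have := mul_le_mul_of_nonneg_right hεKC h
        linarith
    _ = (1/2) * ‖ψ‖ := by ring
  have hLnorm : ‖L‖ < 1 := lt_of_le_of_lt
    (ContinuousLinearMap.opNorm_le_bound _ (by norm_num) hLbound) (by norm_num)
  set c : Fin m → Matrix (Fin n) (Fin n) ℂ := fun i => Sinv (Q i) with hc
  set u := Units.oneSub L hLnorm with hu
  set ψ : Fin m → Matrix (Fin n) (Fin n) ℂ := (↑u⁻¹ : _ →L[ℂ] _) c with hψdef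
  have huval : (↑u : _ →L[ℂ] _) = 1 - L := rfl
  have hfix : ψ - L ψ = c := by
    have h := congrArg (fun f : _ →L[ℂ] _ => f c) u.mul_inv
    simpa [huval, hψdef, ContinuousLinearMap.mul_apply,
      ContinuousLinearMap.sub_apply, ContinuousLinearMap.one_apply] using h
  have hfix' : ∀ i, ψ i = Sinv (Q i) + ε • Sinv (∑ j, D i j • ψ j) := by
    intro i
    have h := congrFun hfix i
    rw [Pi.sub_apply, hLapp] at h
    rw [sub_eq_iff_eq_add] at h
    exact h
  have hsol : ∀ i, ε • (∑ j, D i j • ψ j) + Q i - Aᵀ * ψ i - ψ i * A = 0 := by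
    intro i
    have h1 : ψ i = Sinv (Q i + ε • ∑ j, D i j • ψ j) := by
      rw [map_add, Sinv.map_smul_of_tower]; exact hfix' i
    have h2 := (hS (Q i + ε • ∑ j, D i j • ψ j)).2
    rw [← h1] at h2
    rw [sub_sub, sub_eq_zero, h2]
    exact add_comm _ _
  have huniq : ∀ ψ' : Fin m → Matrix (Fin n) (Fin n) ℂ,
      (∀ i, ε • (∑ j, D i j • ψ' j) + Q i - Aᵀ * ψ' i - ψ' i * A = 0) → ψ' = ψ := by
    intro ψ' hψ'
    have hfix2 : ψ' - L ψ' = c := by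
      funext i
      have h1 : Aᵀ * ψ' i + ψ' i * A = Q i + ε • ∑ j, D i j • ψ' j := by
        have h := hψ' i
        rw [sub_sub, sub_eq_zero] at h
        rw [← h]; exact add_comm _ _
      have h2 := (hS (ψ' i)).1
      rw [h1, map_add, Sinv.map_smul_of_tower] at h2
      rw [Pi.sub_apply, hLapp, hc, sub_eq_iff_eq_add]
      rw [← h2]
    have h := congrArg (fun f : _ →L[ℂ] _ => f ψ') u.inv_mul
    simp only [huval, ContinuousLinearMap.mul_apply, ContinuousLinearMap.sub_apply,
      ContinuousLinearMap.one_apply] at h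
    rw [hfix2] at h
    rw [hψdef]
    exact h.symm
  have hcnorm : ‖c‖ ≤ K / 2 * q := by
    refine pi_norm_le_iff_of_nonneg (mul_nonneg (by linarith) hq0) |>.2 fun i => ?_
    calc ‖Sinv (Q i)‖ ≤ ‖Sinv‖ * ‖Q i‖ := Sinv.le_opNorm _
    _ ≤ K / 2 * q := mul_le_mul hSinv (hQ i) (norm_nonneg _) (by linarith)
  have hψnorm : ‖ψ‖ ≤ K * q := by
    have h1 : ψ = c + L ψ := by rw [← hfix]; abel
    have h2 : ‖ψ‖ ≤ ‖c‖ + ‖L ψ‖ := by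
      calc ‖ψ‖ = ‖c + L ψ‖ := by rw [← h1]
      _ ≤ ‖c‖ + ‖L ψ‖ := norm_add_le _ _
    have h3 := hLbound ψ
    nlinarith [norm_nonneg ψ]
  have hsymm : ∀ i, (ψ i)ᵀ = ψ i := by
    have hT : ∀ i, ε • (∑ j, D i j • (ψ j)ᵀ) + Q i - Aᵀ * (ψ i)ᵀ - (ψ i)ᵀ * A = 0 := by
      intro i
      have h := congrArg Matrix.transpose (hsol i)
      simp only [transpose_sub, transpose_add, transpose_smul, transpose_mul,
        Matrix.transpose_sum, hQsymm, transpose_zero] at h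
      rw [sub_right_comm]
      exact h
    have h := huniq (fun i => (ψ i)ᵀ) hT
    exact fun i => congrFun h i
  exact ⟨ψ, hsol, hsymm, fun i => le_trans (norm_le_pi_norm ψ i) hψnorm,
    fun ψ' h _ => huniq ψ' h⟩
end

section
/- Telescoping identity for the SO (straightening-out) iteration: let ε ∈ ℝ, let X₀ : ℝ^{n_s}×ℝ^{n_f} → ℝ^{n_s} and Y₀ : ℝ^{n_s}×ℝ^{n_f} → ℝ^{n_f} be functions, let η₁,…,η_n : ℝ^{n_s} → ℝ^{n_f} be differentiable, and define recursively for 1 ≤ i ≤ n−1: X_i(x,y) = X_{i−1}(x, y + η_i(x)) and Y_i(x,y) = −ε Dη_i(x) X_{i−1}(x, y + η_i(x)) + Y_{i−1}(x, y + η_i(x)), where Dη_i(x) ∈ ℝ^{n_f×n_s} is the Jacobian of η_i. Then, with the partial sums η^k = Σ_{i=1}^k η_i (and η⁰ = 0), for every n ≥ 1: Y_{n−1}(x, η_n(x)) = −ε Dη^{n−1}(x) X₀(x, η^n(x)) + Y₀(x, η^n(x)) for all x ∈ ℝ^{n_s}. In particular, solving Y_{n−1}(x, η_n(x)) = 0 at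 each step is equivalent to the Fraser–Roussel iteration −ε ∂_x η^{n−1} X₀(x, η^n) + Y₀(x, η^n) = 0. -/
/-- **Telescoping identity for the SO (straightening-out) iteration**.
With `X_i(x,y) = X_{i−1}(x, y+η_i(x))` and
`Y_i(x,y) = −ε Dη_i(x) X_{i−1}(x, y+η_i(x)) + Y_{i−1}(x, y+η_i(x))`, the `n`-th
straightened-out fast field evaluated at `y = η_n(x)` equals the Fraser–Roussel
expression `−ε D(η¹+⋯+η^{n−1})(x) X₀(x, η^n(x)) + Y₀(x, η^n(x))`, where
`η^k = Σ_{i=1}^k η_i`. -/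
theorem so_telescoping_identity
    {ns nf : ℕ} (ε : ℝ)
    (X : ℕ → EuclideanSpace ℝ (Fin ns) × EuclideanSpace ℝ (Fin nf) →
      EuclideanSpace ℝ (Fin ns))
    (Y : ℕ → EuclideanSpace ℝ (Fin ns) × EuclideanSpace ℝ (Fin nf) →
      EuclideanSpace ℝ (Fin nf))
    (η : ℕ → EuclideanSpace ℝ (Fin ns) → EuclideanSpace ℝ (Fin nf))
    (hη : ∀ i, Differentiable ℝ (η i))
    (n : ℕ) (hn : 1 ≤ n)
    (hX : ∀ i, 1 ≤ i → i ≤ n - 1 → ∀ x y, X i (x, y) = X (i - 1) (x, y + η i x))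
    (hY : ∀ i, 1 ≤ i → i ≤ n - 1 → ∀ x y,
      Y i (x, y) = -ε • (fderiv ℝ (η i) x) (X (i - 1) (x, y + η i x)) +
        Y (i - 1) (x, y + η i x)) :
    ∀ x, Y (n - 1) (x, η n x) =
      -ε • (fderiv ℝ (fun x' => ∑ i ∈ Finset.Icc 1 (n - 1), η i x') x)
          (X 0 (x, ∑ i ∈ Finset.Icc 1 n, η i x)) +
        Y 0 (x, ∑ i ∈ Finset.Icc 1 n, η i x) := by
  have key : ∀ k, k ≤ n - 1 → ∀ x y,
      X k (x, y) = X 0 (x, y + ∑ i ∈ Finset.Icc 1 k, η i x) ∧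
      Y k (x, y) = -ε • (fderiv ℝ (fun x' => ∑ i ∈ Finset.Icc 1 k, η i x') x)
          (X 0 (x, y + ∑ i ∈ Finset.Icc 1 k, η i x)) +
        Y 0 (x, y + ∑ i ∈ Finset.Icc 1 k, η i x) := by
    intro k
    induction k with
    | zero =>
      intro _ x y
      simp
    | succ k ih =>
      intro hk x y
      have hk' : k ≤ n - 1 := Nat.le_of_succ_le hk
      have h1 : 1 ≤ k + 1 := Nat.succ_le_succ (Nat.zero_le k)
      have hsum : ∀ (y' : EuclideanSpace ℝ (Fin nf)),
          y' + η (k+1) x + ∑ i ∈ Finset.Icc 1 k, η i x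
            = y' + ∑ i ∈ Finset.Icc 1 (k+1), η i x := by
        intro y'
        rw [Finset.sum_Icc_succ_top h1]
        abel
      have hS : Differentiable ℝ (fun x' => ∑ i ∈ Finset.Icc 1 k, η i x') :=
        Differentiable.fun_sum fun i _ => hη i
      have hD : fderiv ℝ (fun x' => ∑ i ∈ Finset.Icc 1 (k+1), η i x') x
          = fderiv ℝ (fun x' => ∑ i ∈ Finset.Icc 1 k, η i x') x
            + fderiv ℝ (η (k+1)) x := by
        have heq : (fun x' => ∑ i ∈ Finset.Icc 1 (k+1), η i x')
            = fun x' => (∑ i ∈ Finset.Icc 1 k, η i x') + η (k+1) x' := by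
          funext z; rw [Finset.sum_Icc_succ_top h1]
        rw [heq, fderiv_fun_add (hS x) ((hη (k+1)) x)]
      have hXk1 : X (k+1) (x, y) = X 0 (x, y + ∑ i ∈ Finset.Icc 1 (k+1), η i x) := by
        rw [hX (k+1) h1 hk x y]
        simpa using ((ih hk' x (y + η (k+1) x)).1).trans (by rw [hsum])
      refine ⟨hXk1, ?_⟩
      rw [hY (k+1) h1 hk x y]
      have hXk : X k (x, y + η (k+1) x)
          = X 0 (x, y + ∑ i ∈ Finset.Icc 1 (k+1), η i x) := by
        simpa using ((ih hk' x (y + η (k+1) x)).1).trans (by rw [hsum])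
      have hYk := (ih hk' x (y + η (k+1) x)).2
      rw [hsum] at hYk
      simp only [Nat.add_sub_cancel]
      rw [hXk, hYk, hD]
      rw [ContinuousLinearMap.add_apply, smul_add]
      abel
  intro x
  have hn' : n - 1 + 1 = n := Nat.succ_pred_eq_of_pos hn
  have hsum : η n x + ∑ i ∈ Finset.Icc 1 (n-1), η i x
      = ∑ i ∈ Finset.Icc 1 n, η i x := by
    conv_rhs => rw [← hn']
    rw [Finset.sum_Icc_succ_top (Nat.succ_le_succ (Nat.zero_le _)), hn']
    abel
  have h := (key (n-1) le_rfl x (η n x)).2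
  rw [hsum] at h
  exact h
end

section
/- Effect of the linear SOF transformation on Taylor coefficients: let ε ∈ ℝ and let Λ : ℝ^{n_s} → ℝ^{n_s}, μ : ℝ^{n_s} → ℝ^{n_s×n_f}, A : ℝ^{n_s} → ℝ^{n_f×n_f}, φ : ℝ^{n_s} → ℝ^{n_s×n_f} be C¹, and let T : ℝ^{n_s}×ℝ^{n_f} → ℝ^{n_s}, R : ℝ^{n_s}×ℝ^{n_f} → ℝ^{n_f} be C¹ with T(x,0) = 0, ∂_yT(x,0) = 0, R(x,0) = 0, ∂_yR(x,0) = 0 for all x. Define F(x,y) = (ε(Λ(x) + μ(x)y + T(x,y)), A(x)y + R(x,y)) and Φ(x,y) = (x + εφ(x)y, y). Then DΦ(x,0) is invertible for every x, on a neighborhood of ℝ^{n_s}×{0} the pullback G = (DΦ)⁻¹·(F∘Φ) is defined, and its slow component G_s and fast component G_f satisfy, for every x: G_s(x,0) = εΛ(x), G_f(x,0) = 0, ∂_y G_f(x,0) = A(x), and ∂_y G_s(x,0) = ε( ε DΛ(x)φ(x) + μ(x) − φ(x)A(x) − ε(∂_xφ·Λ)(x) ), where ∂_xφ·Λ is the n_s×n_f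 matrix whose k-th column is the directional derivative of the k-th column of φ at x in the direction Λ(x). -/
open ContinuousLinearMap

section Aux
variable {Es Ef : Type*} [NormedAddCommGroup Es] [NormedSpace ℝ Es]
  [NormedAddCommGroup Ef] [NormedSpace ℝ Ef] [CompleteSpace Es] [CompleteSpace Ef]

/-- slow-to-fast shear map `(u,w) ↦ (u + ε φx w, w)` -/
noncomputable def sofP (ε : ℝ) (φx : Ef →L[ℝ] Es) : (Es × Ef) →L[ℝ] (Es × Ef) :=
  ((fst ℝ Es Ef) + ε • φx.comp (snd ℝ Es Ef)).prod (snd ℝ Es Ef)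

noncomputable def sofQ (ε : ℝ) (φx : Ef →L[ℝ] Es) : (Es × Ef) →L[ℝ] (Es × Ef) :=
  ((fst ℝ Es Ef) - ε • φx.comp (snd ℝ Es Ef)).prod (snd ℝ Es Ef)

noncomputable def sofE (ε : ℝ) (φx : Ef →L[ℝ] Es) : (Es × Ef) ≃L[ℝ] (Es × Ef) :=
  ContinuousLinearEquiv.equivOfInverse (sofP ε φx) (sofQ ε φx)
    (fun z => by simp [sofP, sofQ]) (fun z => by simp [sofP, sofQ])

/-- full derivative of `Φ` at a point with slow coeffs `φx`, `dφ`, fast coordinate `y` -/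
noncomputable def sofD (ε : ℝ) (φx : Ef →L[ℝ] Es) (dφ : Es →L[ℝ] (Ef →L[ℝ] Es)) (y : Ef) :
    (Es × Ef) →L[ℝ] (Es × Ef) :=
  ((fst ℝ Es Ef) + ε • (φx.comp (snd ℝ Es Ef) + ((dφ.comp (fst ℝ Es Ef)).flip y))).prod
    (snd ℝ Es Ef)

lemma sofD_zero (ε : ℝ) (φx : Ef →L[ℝ] Es) (dφ : Es →L[ℝ] (Ef →L[ℝ] Es)) :
    sofD ε φx dφ 0 = sofP ε φx := by
  ext z <;> simp [sofD, sofP]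

lemma sof_hasFDerivAt (ε : ℝ) (φ : Es → (Ef →L[ℝ] Es)) (hφ : ContDiff ℝ 1 φ)
    (z : Es × Ef) :
    HasFDerivAt (fun z : Es × Ef => (z.1 + ε • (φ z.1) z.2, z.2))
      (sofD ε (φ z.1) (fderiv ℝ φ z.1) z.2) z := by
  have hc : HasFDerivAt (fun z : Es × Ef => φ z.1)
      ((fderiv ℝ φ z.1).comp (fst ℝ Es Ef)) z :=
    ((hφ.differentiable one_ne_zero z.1).hasFDerivAt).comp z (hasFDerivAt_fst)
  have happ := hc.clm_apply (hasFDerivAt_snd (p := z))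
  exact (hasFDerivAt_fst.add (happ.const_smul ε)).prodMk hasFDerivAt_snd
end Aux

section Aux2
variable {Es Ef : Type*} [NormedAddCommGroup Es] [NormedSpace ℝ Es]
  [NormedAddCommGroup Ef] [NormedSpace ℝ Ef] [CompleteSpace Es] [CompleteSpace Ef]

set_option linter.unusedSectionVars false

/-- the linear part (in `y`) of the derivative of `Φ` -/
noncomputable def sofN (ε : ℝ) (dφ : Es →L[ℝ] (Ef →L[ℝ] Es)) :
    Ef →L[ℝ] ((Es × Ef) →L[ℝ] (Es × Ef)) :=
  ((compL ℝ (Es × Ef) Es (Es × Ef)) (inl ℝ Es Ef)).comp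
    ((((compL ℝ (Es × Ef) Es Es).flip) (fst ℝ Es Ef)).comp (ε • dφ.flip))

lemma sofN_apply (ε : ℝ) (dφ : Es →L[ℝ] (Ef →L[ℝ] Es)) (v : Ef) (z : Es × Ef) :
    sofN ε dφ v z = (ε • (dφ z.1) v, 0) := by
  simp [sofN]

lemma sofD_affine (ε : ℝ) (φx : Ef →L[ℝ] Es) (dφ : Es →L[ℝ] (Ef →L[ℝ] Es)) (y : Ef) :
    sofD ε φx dφ y = sofP ε φx + sofN ε dφ y := by
  ext z <;> simp [sofD, sofP, sofN, smul_add] <;> abel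

/-- `sofP` as a unit of the Banach algebra of endomorphisms -/
noncomputable def sofU (ε : ℝ) (φx : Ef →L[ℝ] Es) : ((Es × Ef) →L[ℝ] (Es × Ef))ˣ where
  val := sofP ε φx
  inv := sofQ ε φx
  val_inv := by ext z <;> simp [sofP, sofQ, ContinuousLinearMap.mul_apply]
  inv_val := by ext z <;> simp [sofP, sofQ, ContinuousLinearMap.mul_apply]

lemma sof_ring_inverse (ε : ℝ) (φx : Ef →L[ℝ] Es) :
    Ring.inverse (sofP ε φx) = sofQ ε φx :=
  Ring.inverse_unit (sofU ε φx)

lemma sofU_inv (ε : ℝ) (φx : Ef →L[ℝ] Es) :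
    (((sofU ε φx)⁻¹ : ((Es × Ef) →L[ℝ] (Es × Ef))ˣ) : (Es × Ef) →L[ℝ] (Es × Ef))
      = sofQ ε φx := rfl

/-- a `C¹` map vanishing on the slow axis with vanishing fast partial there
has vanishing full derivative on the slow axis. -/
lemma sof_fderiv_zero {G : Type*} [NormedAddCommGroup G] [NormedSpace ℝ G]
    (T : Es × Ef → G) (hT : ContDiff ℝ 1 T)
    (hT0 : ∀ x : Es, T (x, 0) = 0 ∧ fderiv ℝ (fun y => T (x, y)) 0 = 0) (x : Es) :
    fderiv ℝ T (x, 0) = 0 := by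
  have hdT := (hT.differentiable one_ne_zero)
  have hx : ∀ u : Es, fderiv ℝ T (x, 0) (u, 0) = 0 := by
    intro u
    have hinner : HasFDerivAt (fun x' : Es => ((x', (0 : Ef)) : Es × Ef))
        ((ContinuousLinearMap.id ℝ Es).prod (0 : Es →L[ℝ] Ef)) x :=
      (hasFDerivAt_id x).prodMk (hasFDerivAt_const (0 : Ef) x)
    have h1 : HasFDerivAt (fun x' : Es => T (x', 0))
        ((fderiv ℝ T (x, 0)).comp ((ContinuousLinearMap.id ℝ Es).prod (0 : Es →L[ℝ] Ef))) x :=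
      ((hdT ((x, (0 : Ef)) : Es × Ef)).hasFDerivAt).comp x hinner
    have h2 : HasFDerivAt (fun x' : Es => T (x', 0)) (0 : Es →L[ℝ] G) x := by
      have : (fun x' : Es => T (x', 0)) = fun _ => (0 : G) := funext fun x' => (hT0 x').1
      rw [this]; exact hasFDerivAt_const 0 x
    have := h1.unique h2
    calc fderiv ℝ T (x, 0) (u, 0)
        = ((fderiv ℝ T (x, 0)).comp ((ContinuousLinearMap.id ℝ Es).prod (0 : Es →L[ℝ] Ef))) u := by simp
      _ = 0 := by rw [this]; simp
  have hy : ∀ v : Ef, fderiv ℝ T (x, 0) (0, v) = 0 := by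
    intro v
    have h1 : HasFDerivAt (fun y : Ef => T (x, y))
        ((fderiv ℝ T (x, 0)).comp ((0 : Ef →L[ℝ] Es).prod (ContinuousLinearMap.id ℝ Ef))) 0 := by
      have hinner : HasFDerivAt (fun y : Ef => ((x, y) : Es × Ef))
          ((0 : Ef →L[ℝ] Es).prod (ContinuousLinearMap.id ℝ Ef)) 0 :=
        (hasFDerivAt_const x 0).prodMk (hasFDerivAt_id 0)
      exact ((hdT ((x, (0 : Ef)) : Es × Ef)).hasFDerivAt).comp 0 hinner
    have h2 := h1.fderiv
    rw [(hT0 x).2] at h2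
    calc fderiv ℝ T (x, 0) (0, v)
        = ((fderiv ℝ T (x, 0)).comp ((0 : Ef →L[ℝ] Es).prod (ContinuousLinearMap.id ℝ Ef))) v := by
          simp
      _ = 0 := by rw [← h2]; simp
  refine ContinuousLinearMap.ext fun z => ?_
  have hz : z = ((z.1, 0) : Es × Ef) + (0, z.2) := by simp
  rw [hz, map_add, hx, hy, add_zero]
  simp
end Aux2

set_option linter.unusedSectionVars false in
set_option maxHeartbeats 1600000 in
theorem sof_aux {Es Ef : Type*} [NormedAddCommGroup Es] [NormedSpace ℝ Es]
    [NormedAddCommGroup Ef] [NormedSpace ℝ Ef] [CompleteSpace Es] [CompleteSpace Ef]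
    (ε : ℝ) (Λ : Es → Es) (μ : Es → (Ef →L[ℝ] Es)) (A : Es → (Ef →L[ℝ] Ef))
    (φ : Es → (Ef →L[ℝ] Es)) (T : Es × Ef → Es) (R : Es × Ef → Ef)
    (hΛ : ContDiff ℝ 1 Λ) (hμ : ContDiff ℝ 1 μ) (hA : ContDiff ℝ 1 A)
    (hφ : ContDiff ℝ 1 φ) (hT : ContDiff ℝ 1 T) (hR : ContDiff ℝ 1 R)
    (hT0 : ∀ x, T (x, 0) = 0 ∧ fderiv ℝ (fun y => T (x, y)) 0 = 0)
    (hR0 : ∀ x, R (x, 0) = 0 ∧ fderiv ℝ (fun y => R (x, y)) 0 = 0) :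
    ∀ F Φ : Es × Ef → Es × Ef,
      F = (fun z => (ε • (Λ z.1 + (μ z.1) z.2 + T z), (A z.1) z.2 + R z)) →
      Φ = (fun z => (z.1 + ε • (φ z.1) z.2, z.2)) →
      (∀ x : Es, ∃ e : (Es × Ef) ≃L[ℝ] (Es × Ef), (e : _ →L[ℝ] _) = fderiv ℝ Φ (x, 0)) ∧
      (∃ W : Set (Es × Ef), IsOpen W ∧ (∀ x, (x, (0 : Ef)) ∈ W) ∧
        ∀ z ∈ W, ∃ e : (Es × Ef) ≃L[ℝ] (Es × Ef), (e : _ →L[ℝ] _) = fderiv ℝ Φ z) ∧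
      ∀ G : Es × Ef → Es × Ef,
        G = (fun z => (fderiv ℝ Φ z).inverse (F (Φ z))) →
        ∀ x : Es,
          (G (x, 0)).1 = ε • Λ x ∧
          (G (x, 0)).2 = 0 ∧
          fderiv ℝ (fun y => (G (x, y)).2) 0 = A x ∧
          fderiv ℝ (fun y => (G (x, y)).1) 0 =
            ε • (ε • ((fderiv ℝ Λ x).comp (φ x)) + μ x - (φ x).comp (A x) -
              ε • ((fderiv ℝ φ x) (Λ x))) := by
  intro F Φ hF hΦ
  subst hF hΦ
  have hfd : ∀ z : Es × Ef,
      fderiv ℝ (fun z : Es × Ef => (z.1 + ε • (φ z.1) z.2, z.2)) z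
        = sofD ε (φ z.1) (fderiv ℝ φ z.1) z.2 :=
    fun z => (sof_hasFDerivAt ε φ hφ z).fderiv
  have hEeq : ∀ x : Es,
      ((sofE ε (φ x) : (Es × Ef) ≃L[ℝ] (Es × Ef)) : (Es × Ef) →L[ℝ] (Es × Ef))
        = fderiv ℝ (fun z : Es × Ef => (z.1 + ε • (φ z.1) z.2, z.2)) (x, 0) := by
    intro x
    rw [hfd (x, 0)]
    exact (sofD_zero ε (φ x) (fderiv ℝ φ x)).symm
  refine ⟨fun x => ⟨sofE ε (φ x), hEeq x⟩, ?_, ?_⟩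
  · -- neighborhood of invertibility
    have hΦc : ContDiff ℝ 1 (fun z : Es × Ef => (z.1 + ε • (φ z.1) z.2, z.2)) :=
      (contDiff_fst.add
        (((hφ.comp contDiff_fst).clm_apply contDiff_snd).const_smul ε)).prodMk contDiff_snd
    have hcont := hΦc.continuous_fderiv one_ne_zero
    refine ⟨(fderiv ℝ (fun z : Es × Ef => (z.1 + ε • (φ z.1) z.2, z.2))) ⁻¹'
        (Set.range ((↑) : ((Es × Ef) ≃L[ℝ] (Es × Ef)) → (Es × Ef) →L[ℝ] (Es × Ef))),
      ContinuousLinearEquiv.isOpen.preimage hcont, fun x => ⟨sofE ε (φ x), hEeq x⟩, ?_⟩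
    rintro z ⟨e, he⟩
    exact ⟨e, he⟩
  · -- Taylor data
    intro G hG x
    have hMfun : ∀ y : Ef,
        fderiv ℝ (fun z : Es × Ef => (z.1 + ε • (φ z.1) z.2, z.2)) (x, y)
          = sofD ε (φ x) (fderiv ℝ φ x) y := fun y => hfd (x, y)
    have hGy : (fun y : Ef => G (x, y)) = fun y : Ef =>
        Ring.inverse (sofD ε (φ x) (fderiv ℝ φ x) y)
          (ε • (Λ (x + ε • (φ x) y) + (μ (x + ε • (φ x) y)) y + T (x + ε • (φ x) y, y)),
           (A (x + ε • (φ x) y)) y + R (x + ε • (φ x) y, y)) := by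
      funext y
      simp only [hG, hMfun y, ← ContinuousLinearMap.ringInverse_eq_inverse]
    have h00 : G (x, 0) = (ε • Λ x, 0) := by
      have h := congrFun hGy 0
      rw [h, sofD_zero, sof_ring_inverse]
      simp [sofQ, (hT0 x).1, (hR0 x).1]
    -- derivative data
    have hq : HasFDerivAt (fun y : Ef => x + ε • (φ x) y) (ε • (φ x)) 0 :=
      ((φ x).hasFDerivAt.const_smul ε).const_add x
    have hMaff : (fun y : Ef => sofD ε (φ x) (fderiv ℝ φ x) y)
        = fun y : Ef => sofP ε (φ x) + sofN ε (fderiv ℝ φ x) y :=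
      funext fun y => sofD_affine ε (φ x) (fderiv ℝ φ x) y
    have hM : HasFDerivAt (fun y : Ef => sofD ε (φ x) (fderiv ℝ φ x) y)
        (sofN ε (fderiv ℝ φ x)) 0 := by
      rw [hMaff]
      exact (sofN ε (fderiv ℝ φ x)).hasFDerivAt.const_add (sofP ε (φ x))
    have hu0 : sofD ε (φ x) (fderiv ℝ φ x) 0 = ((sofU ε (φ x) : ((Es × Ef) →L[ℝ] (Es × Ef))ˣ) :
        (Es × Ef) →L[ℝ] (Es × Ef)) := sofD_zero ε (φ x) (fderiv ℝ φ x)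
    have hinv : HasFDerivAt (fun y : Ef => Ring.inverse (sofD ε (φ x) (fderiv ℝ φ x) y))
        ((-(ContinuousLinearMap.mulLeftRight ℝ ((Es × Ef) →L[ℝ] (Es × Ef))
            ((sofU ε (φ x))⁻¹ : ((Es × Ef) →L[ℝ] (Es × Ef))ˣ)
            ((sofU ε (φ x))⁻¹ : ((Es × Ef) →L[ℝ] (Es × Ef))ˣ))).comp
          (sofN ε (fderiv ℝ φ x))) 0 := by
      have hri := hasFDerivAt_ringInverse (𝕜 := ℝ) (sofU ε (φ x))
      rw [← hu0] at hri
      exact hri.comp 0 hM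
    -- slow component pieces
    have hΛ' := ((hΛ.differentiable one_ne_zero).differentiableAt.hasFDerivAt).comp 0 hq
    have hμ' := (((hμ.differentiable one_ne_zero).differentiableAt.hasFDerivAt).comp 0 hq).clm_apply
      (hasFDerivAt_id (0 : Ef))
    have hT' := ((hT.differentiable one_ne_zero).differentiableAt.hasFDerivAt).comp 0
      (hq.prodMk (hasFDerivAt_id (0 : Ef)))
    have hA' := (((hA.differentiable one_ne_zero).differentiableAt.hasFDerivAt).comp 0 hq).clm_apply
      (hasFDerivAt_id (0 : Ef))
    have hR' := ((hR.differentiable one_ne_zero).differentiableAt.hasFDerivAt).comp 0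
      (hq.prodMk (hasFDerivAt_id (0 : Ef)))
    have hh := (((hΛ'.add hμ').add hT').const_smul ε).prodMk (hA'.add hR')
    have htot := hinv.clm_apply hh
    have hmain := htot
    simp only [Function.comp_def, id_eq, Pi.add_apply, Pi.smul_apply] at hmain
    rw [← hGy] at hmain
    refine ⟨by rw [h00], by rw [h00], ?_, ?_⟩
    · rw [hmain.snd.fderiv]
      ext v
      simp [sofN_apply, sofD_zero, sof_ring_inverse, sofU_inv, sofQ,
        (hT0 x).1, (hR0 x).1, sof_fderiv_zero T hT hT0, sof_fderiv_zero R hR hR0,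
        ContinuousLinearMap.mul_apply]
    · rw [hmain.fst.fderiv]
      ext v
      simp [sofN_apply, sofD_zero, sof_ring_inverse, sofU_inv, sofQ,
        (hT0 x).1, (hR0 x).1, sof_fderiv_zero T hT hT0, sof_fderiv_zero R hR hR0,
        ContinuousLinearMap.mul_apply]
      module



/-- **Effect of the linear SOF transformation on Taylor coefficients**.
For `F(x,y) = (ε(Λ(x)+μ(x)y+T(x,y)), A(x)y+R(x,y))` and
`Φ(x,y) = (x+εφ(x)y, y)`, the derivative `DΦ` is invertible on a neighborhood of
`ℝ^{n_s}×{0}`, so the pullback `G = (DΦ)⁻¹·(F∘Φ)` is defined there, and its Taylor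
data in `y` at `y = 0` is: `G_s(x,0) = εΛ(x)`, `G_f(x,0) = 0`, `∂_yG_f(x,0) = A(x)`
and `∂_yG_s(x,0) = ε(εDΛ(x)φ(x) + μ(x) − φ(x)A(x) − ε(∂_xφ·Λ)(x))`. -/
theorem sof_linear_transformation_taylor
    {ns nf : ℕ} (ε : ℝ)
    (Λ : EuclideanSpace ℝ (Fin ns) → EuclideanSpace ℝ (Fin ns))
    (μ : EuclideanSpace ℝ (Fin ns) →
      (EuclideanSpace ℝ (Fin nf) →L[ℝ] EuclideanSpace ℝ (Fin ns)))
    (A : EuclideanSpace ℝ (Fin ns) →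
      (EuclideanSpace ℝ (Fin nf) →L[ℝ] EuclideanSpace ℝ (Fin nf)))
    (φ : EuclideanSpace ℝ (Fin ns) →
      (EuclideanSpace ℝ (Fin nf) →L[ℝ] EuclideanSpace ℝ (Fin ns)))
    (T : EuclideanSpace ℝ (Fin ns) × EuclideanSpace ℝ (Fin nf) →
      EuclideanSpace ℝ (Fin ns))
    (R : EuclideanSpace ℝ (Fin ns) × EuclideanSpace ℝ (Fin nf) →
      EuclideanSpace ℝ (Fin nf))
    (hΛ : ContDiff ℝ 1 Λ) (hμ : ContDiff ℝ 1 μ) (hA : ContDiff ℝ 1 A)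
    (hφ : ContDiff ℝ 1 φ) (hT : ContDiff ℝ 1 T) (hR : ContDiff ℝ 1 R)
    (hT0 : ∀ x, T (x, 0) = 0 ∧ fderiv ℝ (fun y => T (x, y)) 0 = 0)
    (hR0 : ∀ x, R (x, 0) = 0 ∧ fderiv ℝ (fun y => R (x, y)) 0 = 0) :
    ∀ F Φ : EuclideanSpace ℝ (Fin ns) × EuclideanSpace ℝ (Fin nf) →
        EuclideanSpace ℝ (Fin ns) × EuclideanSpace ℝ (Fin nf),
      F = (fun z => (ε • (Λ z.1 + (μ z.1) z.2 + T z), (A z.1) z.2 + R z)) →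
      Φ = (fun z => (z.1 + ε • (φ z.1) z.2, z.2)) →
      -- DΦ(x,0) is invertible for every x
      (∀ x : EuclideanSpace ℝ (Fin ns),
        ∃ e : (EuclideanSpace ℝ (Fin ns) × EuclideanSpace ℝ (Fin nf)) ≃L[ℝ]
              (EuclideanSpace ℝ (Fin ns) × EuclideanSpace ℝ (Fin nf)),
          (e : _ →L[ℝ] _) = fderiv ℝ Φ (x, 0)) ∧
      -- the pullback is defined on a neighborhood of ℝ^{n_s} × {0}
      (∃ W : Set (EuclideanSpace ℝ (Fin ns) × EuclideanSpace ℝ (Fin nf)),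
        IsOpen W ∧ (∀ x, (x, (0 : EuclideanSpace ℝ (Fin nf))) ∈ W) ∧
        ∀ z ∈ W,
          ∃ e : (EuclideanSpace ℝ (Fin ns) × EuclideanSpace ℝ (Fin nf)) ≃L[ℝ]
                (EuclideanSpace ℝ (Fin ns) × EuclideanSpace ℝ (Fin nf)),
            (e : _ →L[ℝ] _) = fderiv ℝ Φ z) ∧
      -- Taylor data of the pullback G = (DΦ)⁻¹ · (F∘Φ)
      ∀ G : EuclideanSpace ℝ (Fin ns) × EuclideanSpace ℝ (Fin nf) →
          EuclideanSpace ℝ (Fin ns) × EuclideanSpace ℝ (Fin nf),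
        G = (fun z => (fderiv ℝ Φ z).inverse (F (Φ z))) →
        ∀ x : EuclideanSpace ℝ (Fin ns),
          (G (x, 0)).1 = ε • Λ x ∧
          (G (x, 0)).2 = 0 ∧
          fderiv ℝ (fun y => (G (x, y)).2) 0 = A x ∧
          fderiv ℝ (fun y => (G (x, y)).1) 0 =
            ε • (ε • ((fderiv ℝ Λ x).comp (φ x)) + μ x - (φ x).comp (A x) -
              ε • ((fderiv ℝ φ x) (Λ x))) := by
  exact sof_aux ε Λ μ A φ T R hΛ hμ hA hφ hT hR hT0 hR0
end

section
/- Exponentially small defect in the Neishtadt-type example: let 0 < ε ≤ 1/2, set N = ⌊ε⁻¹⌋, ε̄ = ε(1 + sin(2π ε⁻¹)), and f_N(x) = Σ_{k=1}^{N} e^{−k} sin(kx). Then sup_{x ∈ ℝ} | ε^{N} ε̄ f_N^{(N)}(x) | ≤ 2 e² ε^{−1/2} e^{−1/ε}, where f_N^{(N)} denotes the N-th derivative of f_N. -/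
set_option maxHeartbeats 1000000

open Real Finset

private lemma neishtadt_iteratedDeriv_formula (N : ℕ) (n : ℕ) :
    iteratedDeriv n
      (fun t : ℝ => ∑ k ∈ Finset.Icc 1 N, Real.exp (-(k : ℝ)) * Real.sin (k * t))
    = fun x : ℝ => ∑ k ∈ Finset.Icc 1 N,
        Real.exp (-(k : ℝ)) * ((k : ℝ) ^ n * Real.sin (k * x + n * (Real.pi / 2))) := by
  induction n with
  | zero => simp [iteratedDeriv_zero]
  | succ n ih =>
    rw [iteratedDeriv_succ, ih]
    funext x
    have h : HasDerivAt
        (fun x : ℝ => ∑ k ∈ Finset.Icc 1 N,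
          Real.exp (-(k : ℝ)) * ((k : ℝ) ^ n * Real.sin (k * x + n * (Real.pi / 2))))
        (∑ k ∈ Finset.Icc 1 N,
          Real.exp (-(k : ℝ)) * ((k : ℝ) ^ (n + 1) * Real.sin (k * x + (n + 1 : ℕ) * (Real.pi / 2)))) x := by
      apply HasDerivAt.fun_sum
      intro k hk
      have h1 : HasDerivAt (fun x : ℝ => (k : ℝ) * x + n * (Real.pi / 2)) (k : ℝ) x := by
        simpa using ((hasDerivAt_id x).const_mul (k : ℝ)).add_const ((n : ℝ) * (Real.pi / 2))
      have h2 := (Real.hasDerivAt_sin ((k : ℝ) * x + n * (Real.pi / 2))).comp x h1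
      have h3 := (h2.const_mul ((k : ℝ) ^ n)).const_mul (Real.exp (-(k : ℝ)))
      convert h3 using 1
      case e'_4 => rfl
      case e'_8 => rfl
      have hang : ((n + 1 : ℕ) : ℝ) * (Real.pi / 2)
          = (n : ℝ) * (Real.pi / 2) + Real.pi / 2 := by push_cast; ring
      rw [hang, ← add_assoc, Real.sin_add_pi_div_two]
      ring
    exact h.deriv

/-- **Exponentially small defect in the Neishtadt-type example**.
For `0 < ε ≤ 1/2`, `N = ⌊ε⁻¹⌋`, `ε̄ = ε(1 + sin(2πε⁻¹))` and
`f_N(x) = Σ_{k=1}^{N} e^{−k} sin(kx)`, the defect component satisfies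
`sup_x |ε^N ε̄ f_N^{(N)}(x)| ≤ 2e² ε^{−1/2} e^{−1/ε}`. -/
theorem neishtadt_defect_exponentially_small
    (ε : ℝ) (hε0 : 0 < ε) (hε : ε ≤ 1 / 2) :
    ∀ x : ℝ,
      |ε ^ (⌊ε⁻¹⌋₊) * (ε * (1 + Real.sin (2 * Real.pi * ε⁻¹))) *
        iteratedDeriv (⌊ε⁻¹⌋₊)
          (fun t => ∑ k ∈ Finset.Icc 1 (⌊ε⁻¹⌋₊), Real.exp (-(k : ℝ)) * Real.sin (k * t))
          x| ≤
      2 * Real.exp 2 * ε ^ (-(1 / 2 : ℝ)) * Real.exp (-1 / ε) := by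
  intro x
  set N := ⌊ε⁻¹⌋₊ with hNdef
  have hεinv : (2 : ℝ) ≤ ε⁻¹ := by
    rw [le_inv_comm₀ (by norm_num) hε0]; linarith
  have hN1 : 1 ≤ N := Nat.le_floor (by linarith)
  have hNpos : (0 : ℝ) < N := by exact_mod_cast hN1
  have hNle : (N : ℝ) ≤ ε⁻¹ := Nat.floor_le (by positivity)
  have hNgt : ε⁻¹ < N + 1 := Nat.lt_floor_add_one _
  -- Step 1: bound the iterated derivative
  rw [neishtadt_iteratedDeriv_formula]
  beta_reduce
  clear hNdef
  clear_value N
  have hD : |∑ k ∈ Finset.Icc 1 N,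
      Real.exp (-(k : ℝ)) * ((k : ℝ) ^ N * Real.sin (k * x + N * (Real.pi / 2)))|
      ≤ (N : ℝ) * (Nat.factorial N : ℝ) := by
    calc |∑ k ∈ Finset.Icc 1 N,
        Real.exp (-(k : ℝ)) * ((k : ℝ) ^ N * Real.sin (k * x + N * (Real.pi / 2)))|
        ≤ ∑ k ∈ Finset.Icc 1 N, |Real.exp (-(k : ℝ)) * ((k : ℝ) ^ N * Real.sin (k * x + N * (Real.pi / 2)))| :=
          Finset.abs_sum_le_sum_abs _ _
      _ ≤ ∑ k ∈ Finset.Icc 1 N, (Nat.factorial N : ℝ) := by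
          apply Finset.sum_le_sum
          intro k hk
          have hkN : ((k : ℝ)) ^ N / (Nat.factorial N : ℝ) ≤ Real.exp (k : ℝ) :=
            Real.pow_div_factorial_le_exp (x := (k : ℝ)) (by positivity) N
          have hfac : (0 : ℝ) < (Nat.factorial N : ℝ) := by exact_mod_cast Nat.factorial_pos N
          have hkN' : ((k : ℝ)) ^ N ≤ (Nat.factorial N : ℝ) * Real.exp (k : ℝ) := by
            rw [div_le_iff₀ hfac] at hkN; linarith [hkN]
          rw [abs_mul, abs_mul, Real.abs_exp, abs_pow, Nat.abs_cast]
          have hsin : |Real.sin ((k : ℝ) * x + N * (Real.pi / 2))| ≤ 1 := Real.abs_sin_le_one _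
          have hexp : Real.exp (-(k : ℝ)) * Real.exp (k : ℝ) = 1 := by
            rw [← Real.exp_add]; simp
          calc Real.exp (-(k : ℝ)) * ((k : ℝ) ^ N * |Real.sin ((k : ℝ) * x + N * (Real.pi / 2))|)
              ≤ Real.exp (-(k : ℝ)) * ((k : ℝ) ^ N * 1) := by gcongr
            _ = Real.exp (-(k : ℝ)) * (k : ℝ) ^ N := by ring
            _ ≤ Real.exp (-(k : ℝ)) * ((Nat.factorial N : ℝ) * Real.exp (k : ℝ)) := by gcongr
            _ = (Nat.factorial N : ℝ) := by rw [show Real.exp (-(k:ℝ)) * ((Nat.factorial N : ℝ) * Real.exp k) = (Nat.factorial N : ℝ) * (Real.exp (-(k:ℝ)) * Real.exp k) by ring, hexp, mul_one]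
      _ = (Finset.Icc 1 N).card * (Nat.factorial N : ℝ) := by rw [Finset.sum_const, nsmul_eq_mul]
      _ ≤ (N : ℝ) * (Nat.factorial N : ℝ) := by
          have hc : ((Finset.Icc 1 N).card : ℝ) ≤ (N : ℝ) := by
            rw [Nat.card_Icc]; push_cast; norm_num
          gcongr
  -- Step 2: |ε̄| ≤ 2ε
  have hbar : |ε * (1 + Real.sin (2 * Real.pi * ε⁻¹))| ≤ 2 * ε := by
    rw [abs_mul, abs_of_pos hε0]
    have h1 := Real.neg_one_le_sin (2 * Real.pi * ε⁻¹)
    have h2 := Real.sin_le_one (2 * Real.pi * ε⁻¹)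
    rw [abs_of_nonneg (by linarith)]
    nlinarith
  -- Step 3: Stirling bound N! ≤ e √N (N/e)^N
  have hstir : (Nat.factorial N : ℝ) ≤ Real.exp 1 * Real.sqrt N * ((N : ℝ) / Real.exp 1) ^ N := by
    have h := Stirling.stirlingSeq'_antitone (Nat.zero_le (N - 1))
    simp only [Function.comp_apply, Nat.succ_eq_add_one, zero_add,
      Nat.sub_add_cancel hN1] at h
    rw [Stirling.stirlingSeq_one, Stirling.stirlingSeq] at h
    have hden : (0 : ℝ) < Real.sqrt (2 * N) * ((N : ℝ) / Real.exp 1) ^ N := by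
      apply mul_pos (Real.sqrt_pos.mpr (by positivity))
      positivity
    rw [div_le_div_iff₀ hden (by positivity : (0:ℝ) < Real.sqrt 2)] at h
    have hsq : Real.sqrt (2 * N) = Real.sqrt 2 * Real.sqrt N := by
      rw [Real.sqrt_mul (by norm_num)]
    have hs2 : (0 : ℝ) < Real.sqrt 2 := by positivity
    calc (Nat.factorial N : ℝ) = (Nat.factorial N : ℝ) * Real.sqrt 2 / Real.sqrt 2 := by field_simp
      _ ≤ Real.exp 1 * (Real.sqrt (2 * N) * ((N : ℝ) / Real.exp 1) ^ N) / Real.sqrt 2 := by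
          gcongr
      _ = Real.exp 1 * Real.sqrt N * ((N : ℝ) / Real.exp 1) ^ N := by
          rw [hsq]; field_simp
  -- Step 4: combine
  have habs0 : |ε ^ N| = ε ^ N := abs_of_pos (by positivity)
  have hεN : ε * N ≤ 1 := by
    calc ε * N ≤ ε * ε⁻¹ := by gcongr
      _ = 1 := mul_inv_cancel₀ hε0.ne'
  have hmain : ε ^ N * ((N : ℝ) / Real.exp 1) ^ N ≤ Real.exp 1 * Real.exp (-1 / ε) := by
    have h1 : ε ^ N * ((N : ℝ) / Real.exp 1) ^ N = (ε * N / Real.exp 1) ^ N := by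
      rw [← mul_pow]; ring_nf
    rw [h1]
    have h2 : ε * (N : ℝ) / Real.exp 1 ≤ Real.exp (-1) := by
      rw [Real.exp_neg, inv_eq_one_div]
      gcongr
    have h3 : (ε * (N : ℝ) / Real.exp 1) ^ N ≤ Real.exp (-1) ^ N := by
      gcongr
    have h4 : Real.exp (-1 : ℝ) ^ N = Real.exp (-(N : ℝ)) := by
      rw [← Real.exp_nat_mul]; ring_nf
    have h5 : Real.exp (-(N : ℝ)) ≤ Real.exp (1 - 1/ε) := by
      apply Real.exp_le_exp.mpr
      have : 1/ε < N + 1 := by rw [one_div]; exact hNgt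
      linarith
    calc (ε * (N : ℝ) / Real.exp 1) ^ N ≤ Real.exp (-(N : ℝ)) := h3.trans_eq h4
      _ ≤ Real.exp (1 - 1/ε) := h5
      _ = Real.exp 1 * Real.exp (-1 / ε) := by
          rw [← Real.exp_add]; ring_nf
  have hsqrtN : ε * ((N : ℝ) * Real.sqrt N) ≤ ε ^ (-(1/2) : ℝ) := by
    have h1 : Real.sqrt (N : ℝ) ≤ Real.sqrt ε⁻¹ := Real.sqrt_le_sqrt hNle
    have h2 : ε * ((N : ℝ) * Real.sqrt N) ≤ ε * (ε⁻¹ * Real.sqrt ε⁻¹) := by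
      gcongr
    have h3 : ε * (ε⁻¹ * Real.sqrt ε⁻¹) = Real.sqrt ε⁻¹ := by
      field_simp
    have h4 : Real.sqrt ε⁻¹ = ε ^ (-(1/2) : ℝ) := by
      rw [Real.sqrt_eq_rpow, show ε⁻¹ = ε ^ (-1 : ℝ) by rw [Real.rpow_neg_one],
        ← Real.rpow_mul hε0.le]
      norm_num
    exact (h2.trans_eq h3).trans_eq h4
  rw [abs_mul, abs_mul, habs0]
  have s1 := mul_le_mul (mul_le_mul_of_nonneg_left hbar (pow_nonneg hε0.le N)) hD
    (abs_nonneg _) (by positivity)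
  refine s1.trans ?_
  calc ε ^ N * (2 * ε) * ((N : ℝ) * (Nat.factorial N : ℝ))
      ≤ ε ^ N * (2 * ε) * ((N : ℝ) * (Real.exp 1 * Real.sqrt N * ((N : ℝ) / Real.exp 1) ^ N)) := by
        gcongr
    _ = 2 * Real.exp 1 * (ε * ((N : ℝ) * Real.sqrt N)) * (ε ^ N * ((N : ℝ) / Real.exp 1) ^ N) := by
        ring
    _ ≤ 2 * Real.exp 1 * (ε ^ (-(1/2) : ℝ)) * (Real.exp 1 * Real.exp (-1 / ε)) := by
        gcongr
    _ = 2 * Real.exp 2 * ε ^ (-(1 / 2) : ℝ) * Real.exp (-1 / ε) := by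
        rw [show (2 : ℝ) = 1 + 1 by norm_num, Real.exp_add]
        ring
end

section
/- Exact SO computations for the Lindemann mechanism: let ε > 0. (i) η₀(x) = x²/(x+ε) satisfies x(x − η₀(x)) − ε η₀(x) = 0 for all x > −ε. (ii) With X₀(x₀, y₀) = x₀ y₀ − ε x₀²/(x₀+ε) and Y₀(x₀, y₀) = ε x₀³ (x₀+2ε)/(x₀+ε)³ − (2x₀³ + 5ε x₀² + 3ε² x₀ + ε³) y₀/(x₀+ε)², the function η₁(x₀) = ε x₀³ (x₀+2ε) / ( (x₀+ε)(2x₀³ + 5ε x₀² + 3ε² x₀ + ε³) ) satisfies Y₀(x₀, η₁(x₀)) = 0 for all x₀ ≥ 0. (iii) The resulting defect ρ₁(x₀) := −η₁′(x₀) · X₀(x₀, η₁(x₀)) equals ε³ x₀⁴ (3x₀⁴ + 16ε x₀³ + 28ε² x₀² + 20ε³ x₀ + 6ε⁴) / (2x₀³ + 5εx₀² + 3ε²x₀ + ε³)³ for all x₀ ≥ 0; in particular ρ₁(0) = 0. -/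
/-- **Exact SO computations for the Lindemann mechanism**.
(i) `η₀(x) = x²/(x+ε)` solves `x(x−η₀(x)) − εη₀(x) = 0` for `x > −ε`.
(ii) With the straightened fields `X₀, Y₀`, the next correction
`η₁(x₀) = εx₀³(x₀+2ε)/((x₀+ε)(2x₀³+5εx₀²+3ε²x₀+ε³))` solves `Y₀(x₀,η₁(x₀)) = 0`
for `x₀ ≥ 0`.
(iii) The new defect `ρ₁(x₀) = −η₁′(x₀)·X₀(x₀,η₁(x₀))` equals
`ε³x₀⁴(3x₀⁴+16εx₀³+28ε²x₀²+20ε³x₀+6ε⁴)/(2x₀³+5εx₀²+3ε²x₀+ε³)³` for `x₀ ≥ 0`;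
in particular `ρ₁(0) = 0`. -/
theorem lindemann_so_computations (ε : ℝ) (hε : 0 < ε) :
    -- (i)
    (∀ x : ℝ, -ε < x → x * (x - x ^ 2 / (x + ε)) - ε * (x ^ 2 / (x + ε)) = 0) ∧
    -- (ii)
    (∀ x₀ : ℝ, 0 ≤ x₀ →
      ε * x₀ ^ 3 * (x₀ + 2 * ε) / (x₀ + ε) ^ 3 -
        (2 * x₀ ^ 3 + 5 * ε * x₀ ^ 2 + 3 * ε ^ 2 * x₀ + ε ^ 3) *
          (ε * x₀ ^ 3 * (x₀ + 2 * ε) /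
            ((x₀ + ε) * (2 * x₀ ^ 3 + 5 * ε * x₀ ^ 2 + 3 * ε ^ 2 * x₀ + ε ^ 3))) /
          (x₀ + ε) ^ 2 = 0) ∧
    -- (iii)
    (∀ x₀ : ℝ, 0 ≤ x₀ →
      -deriv (fun s => ε * s ^ 3 * (s + 2 * ε) /
          ((s + ε) * (2 * s ^ 3 + 5 * ε * s ^ 2 + 3 * ε ^ 2 * s + ε ^ 3))) x₀ *
        (x₀ * (ε * x₀ ^ 3 * (x₀ + 2 * ε) /
            ((x₀ + ε) * (2 * x₀ ^ 3 + 5 * ε * x₀ ^ 2 + 3 * ε ^ 2 * x₀ + ε ^ 3))) -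
          ε * x₀ ^ 2 / (x₀ + ε)) =
      ε ^ 3 * x₀ ^ 4 *
          (3 * x₀ ^ 4 + 16 * ε * x₀ ^ 3 + 28 * ε ^ 2 * x₀ ^ 2 +
            20 * ε ^ 3 * x₀ + 6 * ε ^ 4) /
        (2 * x₀ ^ 3 + 5 * ε * x₀ ^ 2 + 3 * ε ^ 2 * x₀ + ε ^ 3) ^ 3) ∧
    -- in particular ρ₁(0) = 0
    -deriv (fun s => ε * s ^ 3 * (s + 2 * ε) /
        ((s + ε) * (2 * s ^ 3 + 5 * ε * s ^ 2 + 3 * ε ^ 2 * s + ε ^ 3))) 0 *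
      (0 * (ε * 0 ^ 3 * (0 + 2 * ε) /
          ((0 + ε) * (2 * 0 ^ 3 + 5 * ε * 0 ^ 2 + 3 * ε ^ 2 * 0 + ε ^ 3))) -
        ε * 0 ^ 2 / (0 + ε)) = 0 := by
  have h3 : ∀ x₀ : ℝ, 0 ≤ x₀ →
      -deriv (fun s => ε * s ^ 3 * (s + 2 * ε) /
          ((s + ε) * (2 * s ^ 3 + 5 * ε * s ^ 2 + 3 * ε ^ 2 * s + ε ^ 3))) x₀ *
        (x₀ * (ε * x₀ ^ 3 * (x₀ + 2 * ε) /
            ((x₀ + ε) * (2 * x₀ ^ 3 + 5 * ε * x₀ ^ 2 + 3 * ε ^ 2 * x₀ + ε ^ 3))) -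
          ε * x₀ ^ 2 / (x₀ + ε)) =
      ε ^ 3 * x₀ ^ 4 *
          (3 * x₀ ^ 4 + 16 * ε * x₀ ^ 3 + 28 * ε ^ 2 * x₀ ^ 2 +
            20 * ε ^ 3 * x₀ + 6 * ε ^ 4) /
        (2 * x₀ ^ 3 + 5 * ε * x₀ ^ 2 + 3 * ε ^ 2 * x₀ + ε ^ 3) ^ 3 := by
    intro x₀ hx
    have hxe : (0:ℝ) < x₀ + ε := by linarith
    have hP : (0:ℝ) < 2 * x₀ ^ 3 + 5 * ε * x₀ ^ 2 + 3 * ε ^ 2 * x₀ + ε ^ 3 := by positivity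
    have hxe' : x₀ + ε ≠ 0 := ne_of_gt hxe
    have hP' : 2 * x₀ ^ 3 + 5 * ε * x₀ ^ 2 + 3 * ε ^ 2 * x₀ + ε ^ 3 ≠ 0 := ne_of_gt hP
    have hD0 : (x₀ + ε) * (2 * x₀ ^ 3 + 5 * ε * x₀ ^ 2 + 3 * ε ^ 2 * x₀ + ε ^ 3) ≠ 0 :=
      mul_ne_zero hxe' hP'
    -- derivative of numerator
    have hN : HasDerivAt (fun s : ℝ => ε * s ^ 3 * (s + 2 * ε))
        (ε * (3 * x₀ ^ 2) * (x₀ + 2 * ε) + ε * x₀ ^ 3 * 1) x₀ := by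
      have h1 : HasDerivAt (fun s : ℝ => ε * s ^ 3) (ε * (3 * x₀ ^ 2)) x₀ := by
        simpa using (hasDerivAt_pow 3 x₀).const_mul ε
      have h2 : HasDerivAt (fun s : ℝ => s + 2 * ε) 1 x₀ := by
        simpa using (hasDerivAt_id x₀).add_const (2 * ε)
      exact h1.mul h2
    -- derivative of denominator
    have hQ : HasDerivAt
        (fun s : ℝ => 2 * s ^ 3 + 5 * ε * s ^ 2 + 3 * ε ^ 2 * s + ε ^ 3)
        (2 * (3 * x₀ ^ 2) + 5 * ε * (2 * x₀) + 3 * ε ^ 2) x₀ := by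
      have h1 : HasDerivAt (fun s : ℝ => 2 * s ^ 3) (2 * (3 * x₀ ^ 2)) x₀ := by
        simpa using (hasDerivAt_pow 3 x₀).const_mul (2:ℝ)
      have h2 : HasDerivAt (fun s : ℝ => 5 * ε * s ^ 2) (5 * ε * (2 * x₀)) x₀ := by
        simpa using (hasDerivAt_pow 2 x₀).const_mul (5 * ε)
      have h3' : HasDerivAt (fun s : ℝ => 3 * ε ^ 2 * s) (3 * ε ^ 2) x₀ := by
        simpa using (hasDerivAt_id x₀).const_mul (3 * ε ^ 2)
      exact ((h1.add h2).add h3').add_const (ε ^ 3)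
    have hE : HasDerivAt (fun s : ℝ => s + ε) 1 x₀ := by
      simpa using (hasDerivAt_id x₀).add_const ε
    have hD : HasDerivAt
        (fun s : ℝ => (s + ε) * (2 * s ^ 3 + 5 * ε * s ^ 2 + 3 * ε ^ 2 * s + ε ^ 3))
        (1 * (2 * x₀ ^ 3 + 5 * ε * x₀ ^ 2 + 3 * ε ^ 2 * x₀ + ε ^ 3) +
          (x₀ + ε) * (2 * (3 * x₀ ^ 2) + 5 * ε * (2 * x₀) + 3 * ε ^ 2)) x₀ :=
      hE.mul hQ
    have hder : deriv (fun s => ε * s ^ 3 * (s + 2 * ε) /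
        ((s + ε) * (2 * s ^ 3 + 5 * ε * s ^ 2 + 3 * ε ^ 2 * s + ε ^ 3))) x₀ = _ :=
      (hN.div hD hD0).deriv
    rw [hder]
    field_simp
    ring
  refine ⟨?_, ?_, h3, ?_⟩
  · intro x hx
    have hxe : x + ε ≠ 0 := by linarith
    field_simp
    ring
  · intro x₀ hx
    have hxe : (0:ℝ) < x₀ + ε := by linarith
    have hP : (0:ℝ) < 2 * x₀ ^ 3 + 5 * ε * x₀ ^ 2 + 3 * ε ^ 2 * x₀ + ε ^ 3 := by positivity
    field_simp
    ring
  · have h := h3 0 le_rfl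
    rw [h]
    norm_num
end
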